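/- Let d ≥ 2 and n ≥ 1, and let σ be a permutation of n+2 variables acting on a smooth degree-d hypersurface X ⊂ P^{n+1} stable under σ. Writing σ as a product of disjoint cycles and letting m'_e(σ) be the number of cycles of σ whose length is divisible by e, the primitive cohomology character satisfies χ_pr(σ) = ((−1)^n / d) Σ_{e | d} φ(e)(1−d)^{m'_e(σ)}, where φ is Euler's totient function. In particular, for n = 2, d = 4 and σ = (123)(4) ∈ S₄, χ_pr(σ) = 3. -/

import Mathlib

open scoped BigOperators

/-- The multiplicity of `α` as an eigenvalue of the permutation matrix of `σ`. -/
noncomputable def permEigMult (m : ℕ) (σ : Equiv.Perm (Fin m)) (α : ℂ) : ℕ :=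
  Polynomial.rootMultiplicity α (Matrix.charpoly (σ.permMatrix ℂ))

/-- The full cycle type of `σ` (cycle lengths including fixed points as 1-cycles). -/
def fullCycleType (m : ℕ) (σ : Equiv.Perm (Fin m)) : Multiset ℕ :=
  σ.cycleType + Multiset.replicate (m - σ.support.card) 1

/-- `m'_e(σ)`: the number of cycles of `σ` whose length is divisible by `e`. -/
def numDivisibleCycles (m : ℕ) (σ : Equiv.Perm (Fin m)) (e : ℕ) : ℕ :=
  Multiset.card ((fullCycleType m σ).filter (e ∣ ·))


open Polynomial Matrix Equiv Equiv.Perm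


section aux
variable {α β : Type*} [DecidableEq α] [Fintype α] [DecidableEq β] [Fintype β]

lemma permMatrix_apply (σ : Perm α) (R : Type*) [Zero R] [One R] (i j : α) :
    σ.permMatrix R i j = if σ i = j then 1 else 0 := by
  simp [PEquiv.toMatrix_apply, Equiv.toPEquiv_apply, Option.mem_def, eq_comm]

/-- `permCongr` as a `MulEquiv`. -/
def permCongrMul (e : α ≃ β) : Perm α ≃* Perm β :=
  { e.permCongr with
    map_mul' := fun σ τ => by
      ext b
      simp [Equiv.permCongr_apply] }

lemma permCongrMul_apply (e : α ≃ β) (σ : Perm α) : permCongrMul e σ = e.permCongr σ := rfl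

lemma isCycle_permCongr (e : α ≃ β) {σ : Perm α} (h : σ.IsCycle) :
    (e.permCongr σ).IsCycle := by
  obtain ⟨x, hx, hxy⟩ := h
  refine ⟨e x, by simp [Equiv.permCongr_apply, hx], fun y hy => ?_⟩
  have hy' : σ (e.symm y) ≠ e.symm y := by
    intro hc
    apply hy
    simp [Equiv.permCongr_apply, hc]
  obtain ⟨i, hi⟩ := hxy hy'
  refine ⟨i, ?_⟩
  have : (e.permCongr σ) ^ i = e.permCongr (σ ^ i) := by
    rw [← permCongrMul_apply, ← permCongrMul_apply, map_zpow]
  rw [this]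
  simp only [Equiv.permCongr_apply, Equiv.symm_apply_apply]
  rw [hi, Equiv.apply_symm_apply]

lemma support_permCongr (e : α ≃ β) (σ : Perm α) :
    (e.permCongr σ).support = σ.support.map e.toEmbedding := by
  ext b
  simp only [Perm.mem_support, Finset.mem_map_equiv, Equiv.permCongr_apply, ne_eq,
    Equiv.apply_eq_iff_eq_symm_apply]

lemma permMatrix_permCongr (e : α ≃ β) (σ : Perm α) :
    (e.permCongr σ).permMatrix ℂ = Matrix.reindex e e (σ.permMatrix ℂ) := by
  ext i j
  simp only [permMatrix_apply, Matrix.reindex_apply, Matrix.submatrix_apply,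
    Equiv.permCongr_apply]
  congr 1
  rw [eq_iff_iff]
  constructor
  · intro h; rw [← h, Equiv.symm_apply_apply]
  · intro h; rw [h, Equiv.apply_symm_apply]

lemma charpoly_permCongr (e : α ≃ β) (σ : Perm α) :
    ((e.permCongr σ).permMatrix ℂ).charpoly = (σ.permMatrix ℂ).charpoly := by
  rw [permMatrix_permCongr, Matrix.charpoly_reindex]

lemma permMatrix_sumCongr (σ : Perm α) (τ : Perm β) :
    Equiv.Perm.permMatrix ℂ (Equiv.sumCongr σ τ)
      = Matrix.fromBlocks (σ.permMatrix ℂ) 0 0 (τ.permMatrix ℂ) := by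
  ext i j
  cases i <;> cases j <;>
    simp [permMatrix_apply, Matrix.fromBlocks, PEquiv.toMatrix_apply, Equiv.toPEquiv_apply,
      Option.mem_def, Pi.single_apply, eq_comm]

lemma permMatrix_one : ((1 : Perm α).permMatrix ℂ) = 1 := by
  ext i j
  simp [Matrix.one_apply, PEquiv.toMatrix_apply, Equiv.toPEquiv_apply, Option.mem_def, eq_comm]

lemma charpoly_one' : ((1 : Perm α).permMatrix ℂ).charpoly = (X - 1) ^ Fintype.card α := by
  rw [_root_.permMatrix_one]
  unfold Matrix.charpoly
  rw [charmatrix, _root_.map_one, scalar_apply, ← Matrix.diagonal_one, Matrix.diagonal_sub,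
    Matrix.det_diagonal]
  simp

end aux

section split
variable {α β : Type*} [DecidableEq α] [Fintype α]

lemma perm_eq_permCongr (p : α → Prop) [DecidablePred p] (σ : Equiv.Perm α)
    (h : ∀ x, p (σ x) ↔ p x) :
    σ = (Equiv.sumCompl p).permCongr
      (Equiv.sumCongr (σ.subtypePerm h) (σ.subtypePerm (fun x => not_congr (h x)))) := by
  ext x
  by_cases hx : p x
  · simp [Equiv.permCongr_apply, Equiv.sumCompl_symm_apply_of_pos hx,
      Equiv.Perm.subtypePerm_apply]
  · simp [Equiv.permCongr_apply, Equiv.sumCompl_symm_apply_of_neg hx,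
      Equiv.Perm.subtypePerm_apply]

lemma charpoly_split (p : α → Prop) [DecidablePred p]
    [DecidableEq {x // p x}] [Fintype {x // p x}]
    [DecidableEq {x // ¬ p x}] [Fintype {x // ¬ p x}] (σ : Equiv.Perm α)
    (h : ∀ x, p (σ x) ↔ p x) :
    (σ.permMatrix ℂ).charpoly
      = ((σ.subtypePerm h).permMatrix ℂ).charpoly *
        ((σ.subtypePerm (p := fun x => ¬ p x) (fun x => not_congr (h x))).permMatrix ℂ).charpoly := by
  conv_lhs => rw [perm_eq_permCongr p σ h]
  rw [charpoly_permCongr, permMatrix_sumCongr, Matrix.charpoly_fromBlocks_zero₂₁]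

end split

section finRotate

open Fin.NatCast in
lemma charpoly_finRotate (n : ℕ) :
    (Equiv.Perm.permMatrix ℂ (finRotate (n + 2))).charpoly = X ^ (n + 2) - 1 := by
  classical
  set r : Equiv.Perm (Fin (n + 2)) := finRotate (n + 2) with hr
  set M : Matrix (Fin (n + 2)) (Fin (n + 2)) (Polynomial ℂ) :=
    charmatrix (Equiv.Perm.permMatrix ℂ r) with hM
  have hP : ∀ a b : Fin (n + 2), Equiv.Perm.permMatrix ℂ r a b = if a + 1 = b then 1 else 0 := by
    intro a b
    rw [permMatrix_apply]
    simp [hr, finRotate_succ_apply]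
  have hadd_ne : ∀ i : Fin (n + 2), i + 1 ≠ i := by
    intro i hc
    have : (1 : Fin (n + 2)) = 0 := by
      have := congrArg (· - i) hc
      simpa [add_comm, add_sub_cancel_right, sub_self] using this
    exact one_ne_zero this
  have hMdiag : ∀ i, M i i = X := by
    intro i
    rw [hM, charmatrix_apply_eq, hP]
    simp [hadd_ne i]
  have hMne : ∀ a b : Fin (n + 2), a ≠ b → a + 1 ≠ b → M a b = 0 := by
    intro a b h1 h2
    rw [hM, charmatrix_apply_ne _ _ _ h1, hP]
    simp [h2]
  have hMsub : ∀ b : Fin (n + 2), M (b - 1) b = -1 := by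
    intro b
    have h1 : b - 1 ≠ b := by
      intro hc
      exact hadd_ne (b - 1) (by rw [sub_add_cancel, hc])
    rw [hM, charmatrix_apply_ne _ _ _ h1, hP]
    simp [sub_add_cancel]
  -- r is not the identity
  have hrne : (1 : Equiv.Perm (Fin (n + 2))) ≠ r⁻¹ := by
    intro hc
    have : r 0 = 0 := by
      rw [show r = 1 by rw [← inv_inv r, ← hc, inv_one]]; rfl
    rw [hr, finRotate_succ_apply, zero_add] at this
    exact one_ne_zero this
  -- only 1 and r⁻¹ contribute
  have hvanish : ∀ τ : Equiv.Perm (Fin (n + 2)), τ ∉ ({1, r⁻¹} : Finset (Equiv.Perm (Fin (n + 2)))) →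
      (Equiv.Perm.sign τ • ∏ i, M (τ i) i : Polynomial ℂ) = 0 := by
    intro τ hτ
    simp only [Finset.mem_insert, Finset.mem_singleton, not_or] at hτ
    obtain ⟨hτ1, hτr⟩ := hτ
    suffices h : ∃ i, M (τ i) i = 0 by
      obtain ⟨i, hi⟩ := h
      rw [Finset.prod_eq_zero (f := fun j => M (τ j) j) (Finset.mem_univ i) hi, smul_zero]
    by_contra hc
    push_neg at hc
    have hopt : ∀ i, τ i = i ∨ τ i = i - 1 := by
      intro i
      by_contra hno
      push_neg at hno
      refine hc i (hMne _ _ hno.1 ?_)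
      intro he
      exact hno.2 (eq_sub_of_add_eq he)
    -- if τ has a fixed point, τ = 1
    by_cases hfix : ∃ j, τ j = j
    · obtain ⟨j, hj⟩ := hfix
      have hstep : ∀ k : ℕ, τ (j + (k : Fin (n + 2))) = j + (k : Fin (n + 2)) := by
        intro k
        induction k with
        | zero => simpa using hj
        | succ k ih =>
          have hcast : ((k + 1 : ℕ) : Fin (n + 2)) = (k : Fin (n + 2)) + 1 := by
            push_cast; ring
          rw [hcast, ← add_assoc]
          rcases hopt (j + (k : Fin (n + 2)) + 1) with h | h
          · exact h
          · exfalso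
            rw [add_sub_cancel_right] at h
            have := τ.injective (h.trans ih.symm)
            exact hadd_ne _ this
      exact hτ1 (Equiv.ext fun i => by
        have h1 := hstep ((i - j : Fin (n + 2))).val
        have h2 : j + (((i - j : Fin (n + 2))).val : Fin (n + 2)) = i := by
          rw [Fin.cast_val_eq_self]; exact add_sub_cancel j i
        rw [h2] at h1
        simpa using h1)
    · push_neg at hfix
      refine hτr (Equiv.ext fun i => ?_)
      have h1 : τ i = i - 1 := (hopt i).resolve_left (hfix i)
      have h2 : r (i - 1) = i := by rw [hr, finRotate_succ_apply, sub_add_cancel]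
      have h3 : r⁻¹ i = i - 1 := r.injective (by rw [Equiv.Perm.coe_inv, Equiv.apply_symm_apply, h2])
      rw [h1, h3]
  have hdet : M.det = (Equiv.Perm.sign (1 : Equiv.Perm (Fin (n + 2))) •
        ∏ i, M ((1 : Equiv.Perm (Fin (n + 2))) i) i) +
      (Equiv.Perm.sign r⁻¹ • ∏ i, M (r⁻¹ i) i) := by
    rw [Matrix.det_apply, ← Finset.sum_subset (Finset.subset_univ ({1, r⁻¹} :
      Finset (Equiv.Perm (Fin (n + 2))))) (fun τ _ hτ => hvanish τ hτ),
      Finset.sum_pair hrne]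
  have hterm1 : (Equiv.Perm.sign (1 : Equiv.Perm (Fin (n + 2))) •
      ∏ i, M ((1 : Equiv.Perm (Fin (n + 2))) i) i : Polynomial ℂ) = X ^ (n + 2) := by
    simp [hMdiag]
  have hterm2 : (Equiv.Perm.sign r⁻¹ • ∏ i, M (r⁻¹ i) i : Polynomial ℂ) = -1 := by
    have hri : ∀ i : Fin (n + 2), r⁻¹ i = i - 1 := by
      intro i
      have h2 : r (i - 1) = i := by rw [hr, finRotate_succ_apply, sub_add_cancel]
      exact r.injective (by rw [Equiv.Perm.coe_inv, Equiv.apply_symm_apply, h2])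
    have hsign : Equiv.Perm.sign r⁻¹ = (-1 : ℤˣ) ^ (n + 1) := by
      rw [map_inv, hr, sign_finRotate]; simp
    have hprod : (∏ i, M (r⁻¹ i) i) = (-1 : Polynomial ℂ) ^ (n + 2) := by
      calc (∏ i, M (r⁻¹ i) i) = ∏ _i : Fin (n + 2), (-1 : Polynomial ℂ) :=
            Finset.prod_congr rfl fun i _ => by rw [hri i, hMsub i]
        _ = (-1 : Polynomial ℂ) ^ (n + 2) := by simp
    rw [hsign, hprod]
    rcases Nat.even_or_odd n with he | ho
    · rw [he.add_one.neg_one_pow]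
      simp [Even.add_one, he, Odd.neg_one_pow, Nat.even_add_one, Nat.odd_add_one,
        pow_succ, pow_succ, he.neg_one_pow]
    · rw [Odd.add_one ho |>.neg_one_pow]
      simp [pow_succ, pow_succ, ho.neg_one_pow]
  rw [Matrix.charpoly, ← hM, hdet, hterm1, hterm2]
  ring

end finRotate

section cyclefull
variable {β : Type*} [DecidableEq β] [Fintype β]

lemma charpoly_of_isCycle_full (ρ : Equiv.Perm β) (hρ : ρ.IsCycle)
    (hs : ρ.support = Finset.univ) :
    (ρ.permMatrix ℂ).charpoly = X ^ Fintype.card β - 1 := by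
  have h2 : 2 ≤ Fintype.card β := by
    have := hρ.two_le_card_support
    rwa [hs, Finset.card_univ] at this
  obtain ⟨k, hk⟩ : ∃ k, Fintype.card β = k + 2 := ⟨Fintype.card β - 2, by omega⟩
  have e : β ≃ Fin (k + 2) := Fintype.equivFinOfCardEq hk
  set ρ' := e.permCongr ρ with hρ'
  have hc' : ρ'.IsCycle := isCycle_permCongr e hρ
  have hsupp' : ρ'.support.card = k + 2 := by
    rw [hρ', support_permCongr, Finset.card_map, hs, Finset.card_univ, hk]
  have hconj : IsConj ρ' (finRotate (k + 2)) := by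
    rw [Equiv.Perm.isConj_iff_cycleType_eq, hc'.cycleType, hsupp', cycleType_finRotate]
  obtain ⟨π, hπ⟩ := isConj_iff.mp hconj
  have hfr : finRotate (k + 2) = π.permCongr ρ' := by
    rw [Equiv.permCongr_eq_mul]; exact hπ.symm
  calc (ρ.permMatrix ℂ).charpoly = (ρ'.permMatrix ℂ).charpoly := (charpoly_permCongr e ρ).symm
    _ = ((π.permCongr ρ').permMatrix ℂ).charpoly := (charpoly_permCongr π ρ').symm
    _ = (Equiv.Perm.permMatrix ℂ (finRotate (k + 2))).charpoly := by rw [← hfr]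
    _ = X ^ (k + 2) - 1 := charpoly_finRotate k
    _ = X ^ Fintype.card β - 1 := by rw [hk]

lemma isCycle_subtypePerm_support (c : Equiv.Perm β) (hc : c.IsCycle) :
    (c.subtypePerm (fun x => (Equiv.Perm.apply_mem_support (f := c) (x := x))) :
      Equiv.Perm {x // x ∈ c.support}).IsCycle := by
  obtain ⟨x, hx, hxy⟩ := hc
  refine ⟨⟨x, Equiv.Perm.mem_support.mpr hx⟩, fun hcon => hx (congrArg Subtype.val hcon), ?_⟩
  rintro ⟨y, hy⟩ hymoved
  have : c y ≠ y := Equiv.Perm.mem_support.mp hy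
  exact (Equiv.Perm.sameCycle_subtypePerm).mpr (hxy this)

lemma support_subtypePerm_support (c : Equiv.Perm β) :
    (c.subtypePerm (fun x => (Equiv.Perm.apply_mem_support (f := c) (x := x))) :
      Equiv.Perm {x // x ∈ c.support}).support = Finset.univ := by
  rw [Finset.eq_univ_iff_forall]
  rintro ⟨y, hy⟩
  rw [Equiv.Perm.mem_support]
  intro hcon
  exact Equiv.Perm.mem_support.mp hy (congrArg Subtype.val hcon)

end cyclefull

section main
variable {α : Type*} [DecidableEq α] [Fintype α]

lemma X_sub_one_ne_zero : (X - 1 : Polynomial ℂ) ≠ 0 := by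
  have := Polynomial.X_sub_C_ne_zero (R := ℂ)
  simpa using X_sub_C_ne_zero (1 : ℂ)

set_option maxHeartbeats 2000000 in
lemma charpoly_perm (σ : Equiv.Perm α) :
    (σ.permMatrix ℂ).charpoly
      = (σ.cycleType.map (fun c => X ^ c - 1)).prod
        * (X - 1) ^ (Fintype.card α - σ.support.card) := by
  induction σ using Equiv.Perm.cycle_induction_on with
  | base_one => rw [charpoly_one']; simp
  | base_cycles c hc =>
    have h : ∀ x, c x ∈ c.support ↔ x ∈ c.support :=
      fun x => (Equiv.Perm.apply_mem_support (f := c) (x := x))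
    rw [charpoly_split (· ∈ c.support) c h]
    have h1 : (c.subtypePerm (fun x => not_congr (h x)) :
        Equiv.Perm {x // x ∉ c.support}) = 1 := by
      refine Equiv.ext fun x => Subtype.ext ?_
      simpa [Equiv.Perm.subtypePerm_apply] using Equiv.Perm.notMem_support.mp x.2
    rw [h1, charpoly_one', hc.cycleType]
    have h3 : Fintype.card {x // x ∉ c.support} = Fintype.card α - c.support.card := by
      rw [Fintype.card_subtype_compl, Fintype.card_coe]
    rw [h3]
    have h2 : ((c.subtypePerm h).permMatrix ℂ).charpoly
        = X ^ c.support.card - 1 := by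
      rw [charpoly_of_isCycle_full (c.subtypePerm h) (isCycle_subtypePerm_support c hc)
        (support_subtypePerm_support c), Fintype.card_coe]
    rw [h2]
    simp
  | induction_disjoint σ τ hd hσ ihσ ihτ =>
    have hX1 : (X - 1 : Polynomial ℂ) ≠ 0 := X_sub_one_ne_zero
    set m := Fintype.card α
    set l := σ.support.card with hl
    set s := τ.support.card with hs
    have hτfix : ∀ x ∈ σ.support, τ x = x :=
      fun x hx => (hd x).resolve_left (Equiv.Perm.mem_support.mp hx)
    have hmem : ∀ x, τ x ∈ σ.support ↔ x ∈ σ.support := by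
      intro x
      constructor
      · intro hx
        by_contra hxn
        have h1 : τ (τ x) = τ x := hτfix _ hx
        have h2 : τ x = x := τ.injective h1
        rw [h2] at hx; exact hxn hx
      · intro hx; rw [hτfix x hx]; exact hx
    have h : ∀ x, (σ * τ) x ∈ σ.support ↔ x ∈ σ.support := by
      intro x
      rw [Equiv.Perm.mul_apply, Equiv.Perm.apply_mem_support, hmem]
    have hσh : ∀ x, σ x ∈ σ.support ↔ x ∈ σ.support :=
      fun x => (Equiv.Perm.apply_mem_support (f := σ) (x := x))
    have hτc : ∀ x, τ x ∉ σ.support ↔ x ∉ σ.support := fun x => not_congr (hmem x)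
    have hτp : ∀ x, τ x ∈ σ.support ↔ x ∈ σ.support := fun x => hmem x
    -- identify the restrictions of σ * τ
    have e1 : ((σ * τ).subtypePerm h : Equiv.Perm {x // x ∈ σ.support})
        = σ.subtypePerm hσh := by
      refine Equiv.ext fun x => Subtype.ext ?_
      simp [Equiv.Perm.subtypePerm_apply, Equiv.Perm.mul_apply, hτfix x.1 x.2]
    have e2 : ((σ * τ).subtypePerm (fun x => not_congr (h x)) :
        Equiv.Perm {x // x ∉ σ.support}) = τ.subtypePerm (fun x => (hτc x)) := by
      refine Equiv.ext fun x => Subtype.ext ?_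
      have hτx : τ x.1 ∉ σ.support := (hτc x.1).mpr x.2
      simp [Equiv.Perm.subtypePerm_apply, Equiv.Perm.mul_apply,
        Equiv.Perm.notMem_support.mp hτx]
    -- restriction of σ to complement is 1, restriction of τ to support of σ is 1
    have f1 : (σ.subtypePerm (fun x => not_congr (hσh x)) :
        Equiv.Perm {x // x ∉ σ.support}) = 1 := by
      refine Equiv.ext fun x => Subtype.ext ?_
      simpa [Equiv.Perm.subtypePerm_apply] using Equiv.Perm.notMem_support.mp x.2
    have f2 : (τ.subtypePerm hτp : Equiv.Perm {x // x ∈ σ.support}) = 1 := by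
      refine Equiv.ext fun x => Subtype.ext ?_
      simpa [Equiv.Perm.subtypePerm_apply] using hτfix x.1 x.2
    have hcards : Fintype.card {x // x ∈ σ.support} = l := Fintype.card_coe _
    have hcardc : Fintype.card {x // x ∉ σ.support} = m - l := by
      rw [Fintype.card_subtype_compl, Fintype.card_coe]
    -- cardinal bound
    have hls : l + s ≤ m := by
      have := hd.card_support_mul
      have h2 : (σ * τ).support.card ≤ m := Finset.card_le_univ _
      omega
    -- split σ
    have hA : ((σ.subtypePerm hσh).permMatrix ℂ).charpoly
        = (σ.cycleType.map (fun c => X ^ c - 1)).prod := by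
      have := charpoly_split (· ∈ σ.support) σ hσh
      rw [f1, charpoly_one', hcardc, ihσ] at this
      exact mul_right_cancel₀ (pow_ne_zero _ hX1) this.symm
    -- split τ
    have hB : ((τ.subtypePerm (p := fun x => x ∉ σ.support) (fun x => hτc x)).permMatrix ℂ).charpoly
        = (τ.cycleType.map (fun c => X ^ c - 1)).prod * (X - 1) ^ (m - s - l) := by
      have hsplit := charpoly_split (· ∈ σ.support) τ hτp
      rw [f2, charpoly_one', hcards, ihτ] at hsplit
      have hexp : m - s = (m - s - l) + l := by omega
      rw [hexp, pow_add, ← mul_assoc,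
        mul_comm ((X - 1 : Polynomial ℂ) ^ l)
          ((τ.subtypePerm (fun x => hτc x)).permMatrix ℂ).charpoly] at hsplit
      exact (mul_right_cancel₀ (pow_ne_zero _ hX1) hsplit).symm
    rw [charpoly_split (· ∈ σ.support) (σ * τ) h, e1, e2, hA, hB,
      Equiv.Perm.Disjoint.cycleType_mul hd, Multiset.map_add, Multiset.prod_add,
      Equiv.Perm.Disjoint.card_support_mul hd]
    have hexp2 : m - (l + s) = m - s - l := by omega
    rw [← hl, ← hs, hexp2]
    ring
end main

lemma charpoly_perm_fin (m : ℕ) (σ : Equiv.Perm (Fin m)) :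
    (σ.permMatrix ℂ).charpoly = ((fullCycleType m σ).map (fun c => X ^ c - 1)).prod := by
  rw [fullCycleType, Multiset.map_add, Multiset.prod_add, charpoly_perm]
  congr 1
  rw [Multiset.map_replicate, Multiset.prod_replicate, pow_one, Fintype.card_fin]

lemma X_pow_sub_one_ne_zero {c : ℕ} (hc : 1 ≤ c) : (X ^ c - 1 : Polynomial ℂ) ≠ 0 := by
  simpa using X_pow_sub_C_ne_zero (by omega : 0 < c) (1 : ℂ)

lemma rootMultiplicity_X_pow_sub_one (c : ℕ) (hc : 1 ≤ c) (α : ℂ) :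
    rootMultiplicity α (X ^ c - 1 : Polynomial ℂ) = if α ^ c = 1 then 1 else 0 := by
  classical
  split_ifs with hroot
  · have hne : (X ^ c - 1 : Polynomial ℂ) ≠ 0 := X_pow_sub_one_ne_zero hc
    have hIsRoot : IsRoot (X ^ c - 1 : Polynomial ℂ) α := by
      simp [IsRoot, hroot]
    have hpos : 0 < rootMultiplicity α (X ^ c - 1 : Polynomial ℂ) :=
      (rootMultiplicity_pos hne).mpr hIsRoot
    have hsep : (X ^ c - 1 : Polynomial ℂ).Separable := by
      have := separable_X_pow_sub_C (1 : ℂ)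
        (Nat.cast_ne_zero.mpr (by omega : c ≠ 0)) one_ne_zero
      rwa [Polynomial.C_1] at this
    have hnodup : (X ^ c - 1 : Polynomial ℂ).roots.Nodup := nodup_roots hsep
    have hle : rootMultiplicity α (X ^ c - 1 : Polynomial ℂ) ≤ 1 := by
      rw [← count_roots]
      exact Multiset.nodup_iff_count_le_one.mp hnodup α
    omega
  · refine rootMultiplicity_eq_zero ?_
    simp only [IsRoot, eval_sub, eval_pow, eval_X, eval_one, sub_eq_zero]
    exact hroot

lemma rootMultiplicity_prod_cycles (α : ℂ) (s : Multiset ℕ) (h1 : ∀ c ∈ s, 1 ≤ c) :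
    rootMultiplicity α ((s.map (fun c => X ^ c - 1)).prod : Polynomial ℂ)
      = Multiset.card (s.filter (orderOf α ∣ ·)) := by
  classical
  induction s using Multiset.induction_on with
  | empty =>
    simp only [Multiset.map_zero, Multiset.prod_zero, Multiset.filter_zero, Multiset.card_zero]
    refine rootMultiplicity_eq_zero ?_
    simp [IsRoot]
  | cons c s ih =>
    have hc : 1 ≤ c := h1 c (Multiset.mem_cons_self _ _)
    have hs : ∀ x ∈ s, 1 ≤ x := fun x hx => h1 x (Multiset.mem_cons_of_mem hx)
    have hprodne : ((s.map fun c => X ^ c - 1).prod : Polynomial ℂ) ≠ 0 := by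
      refine Multiset.prod_ne_zero ?_
      intro hzero
      obtain ⟨x, hx, hxz⟩ := Multiset.mem_map.mp hzero
      exact X_pow_sub_one_ne_zero (hs x hx) hxz
    rw [Multiset.map_cons, Multiset.prod_cons,
      rootMultiplicity_mul (mul_ne_zero (X_pow_sub_one_ne_zero hc) hprodne),
      ih hs, rootMultiplicity_X_pow_sub_one c hc, Multiset.filter_cons]
    by_cases hd : orderOf α ∣ c
    · rw [if_pos (orderOf_dvd_iff_pow_eq_one.mp hd), if_pos hd]
      simp [add_comm]
    · rw [if_neg (fun hpow => hd (orderOf_dvd_of_pow_eq_one hpow)), if_neg hd]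
      simp

lemma permEigMult_eq (m : ℕ) (σ : Equiv.Perm (Fin m)) (α : ℂ) :
    permEigMult m σ α = numDivisibleCycles m σ (orderOf α) := by
  have h1 : ∀ c ∈ fullCycleType m σ, 1 ≤ c := by
    intro c hcm
    rw [fullCycleType] at hcm
    rcases Multiset.mem_add.mp hcm with h | h
    · have := Equiv.Perm.two_le_of_mem_cycleType h; omega
    · rw [Multiset.eq_of_mem_replicate h]
  rw [permEigMult, charpoly_perm_fin, numDivisibleCycles,
    rootMultiplicity_prod_cycles α _ h1]

lemma filter_orderOf_eq_primitiveRoots (d e : ℕ) (hd : d ≠ 0) (he : e ∣ d) :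
    (Polynomial.nthRootsFinset d (1 : ℂ)).filter (fun α => orderOf α = e) = primitiveRoots e ℂ := by
  have he0 : 0 < e := by
    rcases Nat.eq_zero_or_pos e with rfl | h
    · exact absurd (zero_dvd_iff.mp he) hd
    · exact h
  ext α
  rw [Finset.mem_filter, mem_primitiveRoots he0]
  constructor
  · rintro ⟨hmem, horder⟩
    exact ⟨horder ▸ pow_orderOf_eq_one α, fun l hl => horder ▸ orderOf_dvd_of_pow_eq_one hl⟩
  · intro hprim
    have hpow_e : α ^ e = 1 := hprim.pow_eq_one
    have hα_d : α ^ d = 1 := by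
      obtain ⟨k, rfl⟩ := he; rw [pow_mul, hpow_e, one_pow]
    refine ⟨(Polynomial.mem_nthRootsFinset (Nat.pos_of_ne_zero hd) (1 : ℂ)).mpr hα_d, ?_⟩
    exact Nat.dvd_antisymm (orderOf_dvd_of_pow_eq_one hpow_e)
      (hprim.dvd_of_pow_eq_one _ (pow_orderOf_eq_one α))

lemma sum_nthRoots_orderOf (d : ℕ) (hd : d ≠ 0) (g : ℕ → ℂ) :
    ∑ α ∈ Polynomial.nthRootsFinset d (1 : ℂ), g (orderOf α)
      = ∑ e ∈ Nat.divisors d, (Nat.totient e : ℂ) * g e := by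
  classical
  have hmaps : ∀ α ∈ Polynomial.nthRootsFinset d (1 : ℂ), orderOf α ∈ Nat.divisors d := by
    intro α hα
    have hpow : α ^ d = 1 := (Polynomial.mem_nthRootsFinset (Nat.pos_of_ne_zero hd) (1 : ℂ)).mp hα
    exact Nat.mem_divisors.mpr ⟨orderOf_dvd_of_pow_eq_one hpow, hd⟩
  rw [← Finset.sum_fiberwise_of_maps_to hmaps (fun α => g (orderOf α))]
  refine Finset.sum_congr rfl fun e he => ?_
  have hed := (Nat.mem_divisors.mp he).1
  calc ∑ α ∈ (Polynomial.nthRootsFinset d (1 : ℂ)).filter (fun α => orderOf α = e), g (orderOf α)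
      = ∑ _α ∈ (Polynomial.nthRootsFinset d (1 : ℂ)).filter (fun α => orderOf α = e), g e :=
        Finset.sum_congr rfl (fun α hα => by rw [(Finset.mem_filter.mp hα).2])
    _ = ((Polynomial.nthRootsFinset d (1 : ℂ)).filter (fun α => orderOf α = e)).card • g e :=
        Finset.sum_const _
    _ = (Nat.totient e : ℂ) * g e := by
        rw [filter_orderOf_eq_primitiveRoots d e hd hed, Complex.card_primitiveRoots,
          nsmul_eq_mul]

lemma key_sum (m d : ℕ) (hd : 2 ≤ d) (σ : Equiv.Perm (Fin m)) :
    ∑ α ∈ Polynomial.nthRootsFinset d (1 : ℂ), ((1 : ℂ) - (d : ℂ)) ^ permEigMult m σ α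
      = ∑ e ∈ Nat.divisors d, (Nat.totient e : ℂ) * ((1 : ℂ) - (d : ℂ)) ^ numDivisibleCycles m σ e := by
  have h := sum_nthRoots_orderOf d (by omega)
    (fun e => ((1 : ℂ) - (d : ℂ)) ^ numDivisibleCycles m σ e)
  rw [← h]
  exact Finset.sum_congr rfl fun α _ => by rw [permEigMult_eq]

set_option maxHeartbeats 2000000 in
/-- For a degree-`d` hypersurface in `ℙ^{n+1}` stable under a coordinate permutation
`σ`, the primitive cohomology character
`χ_pr(σ) = ((−1)^n/d) Σ_{α^d=1} (1−d)^{m_α(σ)}` equals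
`((−1)^n/d) Σ_{e∣d} φ(e)(1−d)^{m'_e(σ)}`; in particular for `n = 2`, `d = 4`
and `σ = (0 1 2)` the value is `3`. -/
theorem stmt7 (n d : ℕ) (hd : 2 ≤ d) (σ : Equiv.Perm (Fin (n + 2))) :
    (((-1 : ℂ) ^ n / (d : ℂ)) *
        ∑ α ∈ Polynomial.nthRootsFinset d (1 : ℂ), ((1 : ℂ) - (d : ℂ)) ^ permEigMult (n + 2) σ α
      = ((-1 : ℂ) ^ n / (d : ℂ)) *
        ∑ e ∈ Nat.divisors d, (Nat.totient e : ℂ) * ((1 : ℂ) - (d : ℂ)) ^ numDivisibleCycles (n + 2) σ e) ∧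
    (((-1 : ℂ) ^ 2 / (4 : ℂ)) *
        ∑ α ∈ Polynomial.nthRootsFinset 4 (1 : ℂ),
          ((1 : ℂ) - (4 : ℂ)) ^ permEigMult 4 (Equiv.swap 0 1 * Equiv.swap 1 2) α = 3) := by
  constructor
  · rw [key_sum (n + 2) d hd σ]
  · have h01 : (0 : Fin 4) ≠ 1 := by decide
    have h02 : (0 : Fin 4) ≠ 2 := by decide
    have h12 : (1 : Fin 4) ≠ 2 := by decide
    have hthree : (Equiv.swap 0 1 * Equiv.swap 1 2 : Equiv.Perm (Fin 4)).IsThreeCycle :=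
      Equiv.Perm.isThreeCycle_swap_mul_swap_same h01 h02 h12
    set c₃ : Equiv.Perm (Fin 4) := Equiv.swap 0 1 * Equiv.swap 1 2 with hc₃
    have hfull : fullCycleType 4 c₃ = {3, 1} := by
      rw [fullCycleType, hthree.cycleType, hthree.card_support]
      decide
    have hkey := key_sum 4 4 (by norm_num) c₃
    have hcast : ((4 : ℕ) : ℂ) = (4 : ℂ) := by norm_num
    rw [hcast] at hkey
    rw [hkey]
    have hdiv : Nat.divisors 4 = {1, 2, 4} := by decide
    have hn1 : numDivisibleCycles 4 c₃ 1 = 2 := by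
      rw [numDivisibleCycles, hfull]; decide
    have hn2 : numDivisibleCycles 4 c₃ 2 = 0 := by
      rw [numDivisibleCycles, hfull]; decide
    have hn4 : numDivisibleCycles 4 c₃ 4 = 0 := by
      rw [numDivisibleCycles, hfull]; decide
    rw [hdiv, Finset.sum_insert (by decide), Finset.sum_insert (by decide),
      Finset.sum_singleton, hn1, hn2, hn4]
    have ht1 : Nat.totient 1 = 1 := by decide
    have ht2 : Nat.totient 2 = 1 := by decide
    have ht4 : Nat.totient 4 = 2 := by decide
    rw [ht1, ht2, ht4]
    norm_num
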